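/- Let β be a (φ, ℓ)-quasiperiodic family and let u ∈ [0, 1]. Then for all x, y ∈ E, ∫₀¹ (β_{t+u} ∧_B β̇_{t+u})(x, y) dt = ∫₀¹ (β_t ∧_B β̇_t)(x, y) dt − ( ℓ ∧_B (β_u − β_0) )(x, y). -/

import Mathlib

/-- `(a ∧_B b)(x, y) = B(a x, b y) - B(a y, b x)` for maps `a, b : E → 𝔤`. -/
def wedgeB {𝔤 E : Type*} [NormedAddCommGroup 𝔤] [NormedSpace ℝ 𝔤]
    [AddCommGroup E] [Module ℝ E]
    (B : 𝔤 →ₗ[ℝ] 𝔤 →ₗ[ℝ] ℝ) (a b : E → 𝔤) (x y : E) : ℝ :=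
  B (a x) (b y) - B (a y) (b x)

/-- A `(φ, r)`-quasiperiodic family of linear maps `E → 𝔤`: smooth in `t` and
`β (t+1) = φ ∘ β t - r`. -/
def QuasiPeriodic {𝔤 E : Type*} [NormedAddCommGroup 𝔤] [NormedSpace ℝ 𝔤]
    [AddCommGroup E] [Module ℝ E]
    (φ : 𝔤 → 𝔤) (r : E → 𝔤) (β : ℝ → E →ₗ[ℝ] 𝔤) : Prop :=
  (∀ x : E, ContDiff ℝ (⊤ : ℕ∞) (fun t => β t x)) ∧
  ∀ (t : ℝ) (x : E), β (t + 1) x = φ (β t x) - r x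

/-- for a `(φ, ℓ)`-quasiperiodic family `β` (with `r = φ ∘ ℓ`) and
`u ∈ [0,1]`, `∫₀¹ (β_{t+u} ∧_B β̇_{t+u}) dt = ∫₀¹ (β_t ∧_B β̇_t) dt - ℓ ∧_B (β_u - β_0)`. -/
theorem Q_integral_shift
    {𝔤 E : Type*} [NormedAddCommGroup 𝔤] [NormedSpace ℝ 𝔤] [FiniteDimensional ℝ 𝔤]
    [AddCommGroup E] [Module ℝ E]
    (br : 𝔤 →ₗ[ℝ] 𝔤 →ₗ[ℝ] 𝔤)
    (br_alt : ∀ x : 𝔤, br x x = 0)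
    (br_jacobi : ∀ x y z : 𝔤, br (br x y) z + br (br y z) x + br (br z x) y = 0)
    (B : 𝔤 →ₗ[ℝ] 𝔤 →ₗ[ℝ] ℝ)
    (B_symm : ∀ x y : 𝔤, B x y = B y x)
    (B_inv : ∀ x y z : 𝔤, B (br x y) z = B x (br y z))
    (φ : 𝔤 ≃ₗ[ℝ] 𝔤)
    (hφbr : ∀ x y : 𝔤, φ (br x y) = br (φ x) (φ y))
    (hφB : ∀ x y : 𝔤, B (φ x) (φ y) = B x y)
    (ℓ : E →ₗ[ℝ] 𝔤)
    (β : ℝ → E →ₗ[ℝ] 𝔤)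
    (hβ : QuasiPeriodic ⇑φ (fun x => φ (ℓ x)) β)
    (u : ℝ) (hu : u ∈ Set.Icc (0 : ℝ) 1) (x y : E) :
    (∫ t in (0:ℝ)..1,
        wedgeB B (⇑(β (t + u))) (fun e => deriv (fun s => β s e) (t + u)) x y)
      = (∫ t in (0:ℝ)..1,
          wedgeB B (⇑(β t)) (fun e => deriv (fun s => β s e) t) x y)
        - wedgeB B (⇑ℓ) (fun e => β u e - β 0 e) x y := by
  classical
  obtain ⟨hsm, hper⟩ := hβ
  -- continuous versions of B and φ
  let Bc : 𝔤 →L[ℝ] 𝔤 →L[ℝ] ℝ :=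
    LinearMap.toContinuousLinearMap
      ((LinearMap.toContinuousLinearMap :
          (𝔤 →ₗ[ℝ] ℝ) ≃ₗ[ℝ] (𝔤 →L[ℝ] ℝ)).toLinearMap ∘ₗ B)
  have hBc : ∀ g h : 𝔤, Bc g h = B g h := fun g h => rfl
  let φc : 𝔤 →L[ℝ] 𝔤 := LinearMap.toContinuousLinearMap (φ : 𝔤 →ₗ[ℝ] 𝔤)
  have hφc : ∀ g : 𝔤, φc g = φ g := fun g => rfl
  set db : E → ℝ → 𝔤 := fun e t => deriv (fun s => β s e) t with hdb
  have hD : ∀ (e : E) (t : ℝ), HasDerivAt (fun s => β s e) (db e t) t := fun e t =>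
    (((hsm e).differentiable (by simp)) t).hasDerivAt
  have hdbc : ∀ e : E, Continuous (db e) := fun e => (hsm e).continuous_deriv (by exact_mod_cast le_top)
  have hbc : ∀ e : E, Continuous fun t => β t e := fun e => (hsm e).continuous
  have hcont2 : ∀ (a c : ℝ → 𝔤), Continuous a → Continuous c →
      Continuous fun t => B (a t) (c t) := by
    intro a c ha hc
    have : (fun t => B (a t) (c t)) = fun t => Bc (a t) (c t) := rfl
    rw [this]
    exact Bc.continuous₂.comp (ha.prodMk hc)
  set f : ℝ → ℝ := fun t => wedgeB B (⇑(β t)) (fun e => db e t) x y with hfdef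
  have hfc : Continuous f := by
    simp only [hfdef, wedgeB]
    exact (hcont2 _ _ (hbc x) (hdbc y)).sub (hcont2 _ _ (hbc y) (hdbc x))
  have hint : ∀ a b : ℝ, IntervalIntegrable f MeasureTheory.volume a b := fun a b =>
    hfc.intervalIntegrable a b
  -- derivative shift
  have hshift : ∀ (e : E) (t : ℝ), db e (t + 1) = φ (db e t) := by
    intro e t
    have h1 : HasDerivAt (fun s => β (s + 1) e) (db e (t + 1)) t := by
      have hg : HasDerivAt (fun s : ℝ => s + 1) 1 t := by
        simpa using (hasDerivAt_id t).add_const 1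
      have := (hD e (t + 1)).scomp t hg
      simpa [Function.comp_def] using this
    have h2 : HasDerivAt (fun s => β (s + 1) e) (φ (db e t)) t := by
      have heq : (fun s => β (s + 1) e) = fun s => φ (β s e) - φ (ℓ e) :=
        funext fun s => hper s e
      rw [heq]
      exact (φc.hasFDerivAt.comp_hasDerivAt t (hD e t)).sub_const _
    exact h1.unique h2
  -- periodicity of f
  have hfper : ∀ t : ℝ, f (t + 1) = f t - (B (ℓ x) (db y t) - B (ℓ y) (db x t)) := by
    intro t
    simp only [hfdef, wedgeB]
    rw [hper t x, hper t y, hshift x t, hshift y t]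
    simp only [map_sub, LinearMap.sub_apply, hφB]
    ring
  -- FTC for the boundary term
  set g : ℝ → ℝ := fun t => B (ℓ x) (β t y) - B (ℓ y) (β t x) with hgdef
  have hgD : ∀ t : ℝ, HasDerivAt g (B (ℓ x) (db y t) - B (ℓ y) (db x t)) t := by
    intro t
    have h1 : HasDerivAt (fun s => B (ℓ x) (β s y)) (B (ℓ x) (db y t)) t :=
      (Bc (ℓ x)).hasFDerivAt.comp_hasDerivAt t (hD y t)
    have h2 : HasDerivAt (fun s => B (ℓ y) (β s x)) (B (ℓ y) (db x t)) t :=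
      (Bc (ℓ y)).hasFDerivAt.comp_hasDerivAt t (hD x t)
    exact h1.sub h2
  have hgcont : Continuous fun t => B (ℓ x) (db y t) - B (ℓ y) (db x t) :=
    (hcont2 _ _ continuous_const (hdbc y)).sub (hcont2 _ _ continuous_const (hdbc x))
  have hFTC : (∫ t in (0:ℝ)..u, (B (ℓ x) (db y t) - B (ℓ y) (db x t))) = g u - g 0 :=
    intervalIntegral.integral_eq_sub_of_hasDerivAt (fun t _ => hgD t)
      (hgcont.intervalIntegrable 0 u)
  -- integral manipulations
  have e1 : (∫ t in (0:ℝ)..1, f (t + u)) = ∫ t in u..(1 + u), f t := by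
    simpa using intervalIntegral.integral_comp_add_right (a := (0:ℝ)) (b := 1) f u
  have e2 : (∫ t in u..(1 + u), f t) = (∫ t in u..(1:ℝ), f t) + ∫ t in (1:ℝ)..(1 + u), f t :=
    (intervalIntegral.integral_add_adjacent_intervals (hint u 1) (hint 1 (1 + u))).symm
  have e3 : (∫ t in (1:ℝ)..(1 + u), f t) = ∫ t in (0:ℝ)..u, f (t + 1) := by
    have := intervalIntegral.integral_comp_add_right (a := (0:ℝ)) (b := u) f 1
    rw [this, zero_add, add_comm u 1]
  have e4 : (∫ t in (0:ℝ)..u, f (t + 1))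
      = (∫ t in (0:ℝ)..u, f t) - ∫ t in (0:ℝ)..u, (B (ℓ x) (db y t) - B (ℓ y) (db x t)) := by
    rw [← intervalIntegral.integral_sub (hint 0 u) (hgcont.intervalIntegrable 0 u)]
    exact intervalIntegral.integral_congr fun t _ => hfper t
  have e5 : (∫ t in (0:ℝ)..1, f t) = (∫ t in (0:ℝ)..u, f t) + ∫ t in u..(1:ℝ), f t :=
    (intervalIntegral.integral_add_adjacent_intervals (hint 0 u) (hint u 1)).symm
  have e6 : wedgeB B (⇑ℓ) (fun e => β u e - β 0 e) x y = g u - g 0 := by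
    simp only [wedgeB, hgdef, map_sub]
    ring
  calc (∫ t in (0:ℝ)..1,
        wedgeB B (⇑(β (t + u))) (fun e => deriv (fun s => β s e) (t + u)) x y)
      = ∫ t in (0:ℝ)..1, f (t + u) := rfl
    _ = (∫ t in u..(1:ℝ), f t) + ((∫ t in (0:ℝ)..u, f t) - (g u - g 0)) := by
        rw [e1, e2, e3, e4, hFTC]
    _ = (∫ t in (0:ℝ)..1, f t) - wedgeB B (⇑ℓ) (fun e => β u e - β 0 e) x y := by
        rw [e5, e6]; ring
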